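/- The delayed exponential function e_r^{kt} is the unique continuous solution on [0,∞) of the delayed ODE z'(t) = k z(t - r) with initial condition z(s) = 1 for s ∈ [-r, 0]. -/

import Mathlib

open Real Filter

noncomputable def delayedExp (r k : ℝ) (t : ℝ) : ℝ :=
  if t < -r then 0
  else if t < 0 then 1
  else ∑ j ∈ Finset.range (⌊t / r⌋.toNat + 2),
    k ^ j * (t - ((j : ℝ) - 1) * r) ^ j / (Nat.factorial j)

noncomputable def gsum (r k : ℝ) (N : ℕ) (t : ℝ) : ℝ :=
  ∑ j ∈ Finset.range N, k ^ j * (max (t - ((j : ℝ) - 1) * r) 0) ^ j / (Nat.factorial j)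

lemma gsum_nonpos {r k : ℝ} (hr : 0 < r) {N : ℕ} (hN : 1 ≤ N) {t : ℝ} (ht : t ≤ 0) :
    gsum r k N t = 1 := by
  unfold gsum
  rw [Finset.sum_eq_single 0]
  · simp
  · intro j hj hj0
    have h1 : (1:ℝ) ≤ (j:ℝ) := by exact_mod_cast Nat.one_le_iff_ne_zero.mpr hj0
    have : t - ((j:ℝ) - 1) * r ≤ 0 := by nlinarith
    rw [max_eq_right this, zero_pow hj0]
    simp
  · intro h; exact absurd (Finset.mem_range.mpr hN) h

lemma delayedExp_eq_gsum {r k : ℝ} (hr : 0 < r) {t : ℝ} (ht : 0 ≤ t) {N : ℕ}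
    (hN : ⌊t / r⌋.toNat + 2 ≤ N) : delayedExp r k t = gsum r k N t := by
  have h1 : ¬ t < -r := by linarith
  have h2 : ¬ t < 0 := by linarith
  rw [delayedExp, if_neg h1, if_neg h2, gsum]
  have hfl : (0:ℤ) ≤ ⌊t / r⌋ := Int.floor_nonneg.mpr (div_nonneg ht hr.le)
  have hM : ((⌊t / r⌋.toNat : ℕ) : ℝ) = ((⌊t/r⌋ : ℤ) : ℝ) := by
    rw [show ((⌊t/r⌋.toNat : ℕ) : ℝ) = ((⌊t/r⌋.toNat : ℤ) : ℝ) by push_cast; ring,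
      Int.toNat_of_nonneg hfl]
  have hMle : (⌊t / r⌋.toNat : ℝ) * r ≤ t := by
    have := Int.floor_le (t / r)
    have h : (⌊t / r⌋.toNat : ℝ) ≤ t / r := by rw [hM]; exact this
    calc (⌊t / r⌋.toNat : ℝ) * r ≤ (t/r) * r := by nlinarith
      _ = t := div_mul_cancel₀ t hr.ne'
  have hMgt : t < ((⌊t / r⌋.toNat : ℝ) + 1) * r := by
    have := Int.lt_floor_add_one (t / r)
    have h : t / r < (⌊t / r⌋.toNat : ℝ) + 1 := by rw [hM]; exact_mod_cast this
    calc t = (t/r) * r := (div_mul_cancel₀ t hr.ne').symm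
      _ < ((⌊t / r⌋.toNat : ℝ) + 1) * r := by nlinarith
  rw [← Finset.sum_subset (Finset.range_subset_range.mpr hN)]
  · apply Finset.sum_congr rfl
    intro j hj
    have hj' : (j:ℝ) ≤ (⌊t / r⌋.toNat : ℝ) + 1 := by
      have := Finset.mem_range.mp hj
      exact_mod_cast Nat.lt_succ_iff.mp (by omega)
    have : 0 ≤ t - ((j:ℝ) - 1) * r := by nlinarith
    rw [max_eq_left this]
  · intro j _ hj
    have hj' : (⌊t / r⌋.toNat : ℝ) + 2 ≤ (j:ℝ) := by
      have := Finset.mem_range.not.mp hj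
      exact_mod_cast by omega
    have hneg : t - ((j:ℝ) - 1) * r ≤ 0 := by nlinarith
    have hj0 : j ≠ 0 := by
      intro h; rw [h] at hj'; norm_num at hj'; nlinarith [Nat.cast_nonneg (α := ℝ) ⌊t / r⌋.toNat]
    rw [max_eq_right hneg, zero_pow hj0]
    simp

/-- delayedExp equals gsum N on [-r,∞) provided N is big enough. -/
lemma delayedExp_eq_gsum' {r k : ℝ} (hr : 0 < r) {t : ℝ} (ht : -r ≤ t) {N : ℕ}
    (hN1 : 1 ≤ N) (hN : 0 ≤ t → ⌊t / r⌋.toNat + 2 ≤ N) :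
    delayedExp r k t = gsum r k N t := by
  rcases lt_or_ge t 0 with h | h
  · rw [delayedExp, if_neg (by linarith), if_pos h, gsum_nonpos hr hN1 h.le]
  · exact delayedExp_eq_gsum hr h (hN h)

lemma hasDerivAt_maxpow (c x : ℝ) {j : ℕ} (hj : 1 ≤ j) (h1 : j = 1 → c < x) :
    HasDerivAt (fun t => max (t - c) 0 ^ j) ((j : ℝ) * max (x - c) 0 ^ (j - 1)) x := by
  rcases lt_trichotomy x c with hlt | heq | hgt
  · have hj2 : 2 ≤ j := by
      rcases Nat.eq_or_lt_of_le hj with h | h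
      · exact absurd (h1 h.symm) (by linarith)
      · omega
    have hev : (fun t => max (t - c) 0 ^ j) =ᶠ[nhds x] fun _ => (0:ℝ) := by
      filter_upwards [Iio_mem_nhds hlt] with t ht
      rw [max_eq_right (by simp only [Set.mem_Iio] at ht; linarith), zero_pow (by omega)]
    have h0 : max (x - c) 0 = 0 := max_eq_right (by linarith)
    rw [h0, zero_pow (by omega), mul_zero]
    exact (hasDerivAt_const x (0:ℝ)).congr_of_eventuallyEq hev
  · subst heq
    have hj2 : 2 ≤ j := by
      rcases Nat.eq_or_lt_of_le hj with h | h
      · exact absurd (h1 h.symm) (lt_irrefl x)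
      · omega
    have h0 : max (x - x) 0 = 0 := by simp
    rw [h0, zero_pow (by omega), mul_zero]
    rw [hasDerivAt_iff_tendsto_slope]
    have hg : Filter.Tendsto (fun t => max (t - x) 0 ^ (j - 1)) (nhdsWithin x {x}ᶜ) (nhds 0) := by
      have hc : Continuous fun t : ℝ => max (t - x) 0 ^ (j - 1) := by fun_prop
      have := (hc.tendsto x).mono_left (nhdsWithin_le_nhds (s := {x}ᶜ))
      simpa [zero_pow (show j - 1 ≠ 0 by omega)] using this
    refine hg.congr' ?_
    filter_upwards [self_mem_nhdsWithin] with t ht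
    have hne : t - x ≠ 0 := sub_ne_zero.mpr ht
    have key : max (t - x) 0 ^ j = max (t - x) 0 ^ (j-1) * (t - x) := by
      rcases le_or_gt (t - x) 0 with h | h
      · rw [max_eq_right h, zero_pow (by omega), zero_pow (by omega), zero_mul]
      · rw [max_eq_left h.le, ← pow_succ]
        congr 1; omega
    rw [slope_def_field]
    rw [show max (x - x) 0 = 0 by simp, zero_pow (by omega), sub_zero, key]
    field_simp
  · have hev : (fun t => max (t - c) 0 ^ j) =ᶠ[nhds x] fun t => (t - c) ^ j := by
      filter_upwards [Ioi_mem_nhds hgt] with t ht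
      rw [max_eq_left (by simp only [Set.mem_Ioi] at ht; linarith)]
    have : HasDerivAt (fun t : ℝ => (t - c) ^ j) ((j:ℝ) * (x - c) ^ (j-1) * 1) x :=
      HasDerivAt.fun_pow ((hasDerivAt_id x).sub_const c) j
    rw [max_eq_left (by linarith)]
    simpa using this.congr_of_eventuallyEq hev

lemma gsum_hasDerivAt {r k : ℝ} (N : ℕ) {t : ℝ} (ht : 0 < t) :
    HasDerivAt (gsum r k (N + 1)) (k * gsum r k N (t - r)) t := by
  have key : HasDerivAt (gsum r k (N + 1))
      (∑ j ∈ Finset.range (N + 1),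
        k ^ j * ((j : ℝ) * max (t - ((j : ℝ) - 1) * r) 0 ^ (j - 1)) / (Nat.factorial j)) t := by
    apply HasDerivAt.fun_sum
    intro j hj
    rcases Nat.eq_zero_or_pos j with h0 | hpos
    · subst h0
      simp only [Nat.cast_zero, pow_zero, zero_mul, one_mul, Nat.factorial_zero, zero_div]
      simpa using (hasDerivAt_const t (1:ℝ)).congr_of_eventuallyEq
        (Filter.Eventually.of_forall (fun x => by simp))
    · have hd := hasDerivAt_maxpow (((j:ℝ) - 1) * r) t hpos
        (fun hj1 => by rw [hj1]; push_cast; simpa using ht)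
      exact (hd.const_mul (k ^ j)).div_const (Nat.factorial j : ℝ)
  convert key using 1
  rw [Finset.sum_range_succ']
  simp only [Nat.cast_zero, zero_mul, mul_zero, zero_div, add_zero]
  rw [gsum, Finset.mul_sum]
  apply Finset.sum_congr rfl
  intro i hi
  have harg : t - ((i:ℝ) + 1 - 1) * r = (t - r) - ((i:ℝ) - 1) * r := by ring
  push_cast
  rw [harg, Nat.factorial_succ]
  push_cast
  field_simp
  ring

lemma floor_toNat_mono {r : ℝ} (hr : 0 < r) {a b : ℝ} (hab : a ≤ b) :
    ⌊a / r⌋.toNat ≤ ⌊b / r⌋.toNat :=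
  Int.toNat_le_toNat (Int.floor_le_floor (by gcongr))

lemma delayedExp_hasDerivAt {r k : ℝ} (hr : 0 < r) {t : ℝ} (ht : 0 < t) :
    HasDerivAt (delayedExp r k) (k * delayedExp r k (t - r)) t := by
  set N : ℕ := ⌊(t + 1) / r⌋.toNat + 1 with hNdef
  have hval : delayedExp r k (t - r) = gsum r k N (t - r) := by
    apply delayedExp_eq_gsum' hr (by linarith) (by omega)
    intro htr
    have h1 : ⌊(t - r) / r⌋ = ⌊t / r⌋ - 1 := by
      rw [show (t - r)/r = t/r - 1 by field_simp]
      exact_mod_cast Int.floor_sub_intCast (t/r) 1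
    have hfl : (1:ℤ) ≤ ⌊t / r⌋ := by
      apply Int.le_floor.mpr
      rw [Int.cast_one, le_div_iff₀ hr, one_mul]
      linarith
    have h2 : ⌊(t - r)/r⌋.toNat + 1 = ⌊t/r⌋.toNat := by
      rw [h1]; omega
    have h3 : ⌊t/r⌋.toNat ≤ ⌊(t+1)/r⌋.toNat := floor_toNat_mono hr (by linarith)
    omega
  have heq : delayedExp r k =ᶠ[nhds t] gsum r k (N + 1) := by
    have hopen : Set.Ioo (-r) (t + 1) ∈ nhds t := Ioo_mem_nhds (by linarith) (by linarith)
    filter_upwards [hopen] with x hx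
    exact delayedExp_eq_gsum' hr hx.1.le (by omega)
      (fun _ => by
        have := floor_toNat_mono hr (le_of_lt hx.2)
        omega)
  rw [hval]
  exact (gsum_hasDerivAt N ht).congr_of_eventuallyEq heq

lemma gsum_continuous (r k : ℝ) (N : ℕ) : Continuous (gsum r k N) := by
  unfold gsum
  apply continuous_finset_sum
  intro j _
  fun_prop

lemma delayedExp_continuousOn {r k : ℝ} (hr : 0 < r) :
    ContinuousOn (delayedExp r k) (Set.Ici (-r)) := by
  intro t ht
  set N : ℕ := ⌊(t + 1) / r⌋.toNat + 2 with hNdef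
  have hmem : Set.Ici (-r) ∩ Set.Iio (t + 1) ∈ nhdsWithin t (Set.Ici (-r)) :=
    Filter.inter_mem self_mem_nhdsWithin
      (mem_nhdsWithin_of_mem_nhds (Iio_mem_nhds (by linarith)))
  have heq : delayedExp r k =ᶠ[nhdsWithin t (Set.Ici (-r))] gsum r k N := by
    filter_upwards [hmem] with x hx
    exact delayedExp_eq_gsum' hr hx.1 (by omega)
      (fun _ => by
        have := floor_toNat_mono hr (le_of_lt hx.2)
        omega)
  have htx : delayedExp r k t = gsum r k N t :=
    delayedExp_eq_gsum' hr ht (by omega)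
      (fun _ => by
        have := floor_toNat_mono hr (show t ≤ t + 1 by linarith)
        omega)
  exact ((gsum_continuous r k N).continuousWithinAt).congr_of_eventuallyEq heq htx

lemma delayedExp_init {r k : ℝ} (hr : 0 < r) {s : ℝ} (hs : s ∈ Set.Icc (-r) (0:ℝ)) :
    delayedExp r k s = 1 := by
  rcases lt_or_ge s 0 with h | h
  · rw [delayedExp, if_neg (by linarith [hs.1]), if_pos h]
  · have hs0 : s = 0 := le_antisymm hs.2 h
    subst hs0
    rw [delayedExp, if_neg (by linarith), if_neg (by linarith)]
    norm_num [Finset.sum_range_succ]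

lemma const_of_deriv_zero {f : ℝ → ℝ} {a b : ℝ} (hab : a ≤ b)
    (hcont : ContinuousOn f (Set.Icc a b))
    (hderiv : ∀ x ∈ Set.Ioo a b, HasDerivAt f 0 x) : f b = f a := by
  rcases eq_or_lt_of_le hab with h | h
  · rw [h]
  · obtain ⟨c, hc, hc'⟩ := exists_hasDerivAt_eq_slope f (fun _ => (0:ℝ)) h hcont hderiv
    have := hc'.symm
    rw [div_eq_iff (by linarith)] at this
    linarith [this]

theorem stmt_2 (r k : ℝ) (hr : 0 < r) :
    (ContinuousOn (delayedExp r k) (Set.Ici (-r)) ∧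
      (∀ s ∈ Set.Icc (-r) (0 : ℝ), delayedExp r k s = 1) ∧
      (∀ t > (0 : ℝ), HasDerivAt (delayedExp r k) (k * delayedExp r k (t - r)) t)) ∧
    (∀ z : ℝ → ℝ, ContinuousOn z (Set.Ici (-r)) →
      (∀ s ∈ Set.Icc (-r) (0 : ℝ), z s = 1) →
      (∀ t > (0 : ℝ), HasDerivAt z (k * z (t - r)) t) →
      ∀ t ∈ Set.Ici (-r), z t = delayedExp r k t) := by
  refine ⟨⟨delayedExp_continuousOn hr, fun s hs => delayedExp_init hr hs,
    fun t ht => delayedExp_hasDerivAt hr ht⟩, ?_⟩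
  intro z hzc hz0 hzd
  set E := delayedExp r k with hE
  set D : ℝ → ℝ := fun t => z t - E t with hD
  have hDc : ContinuousOn D (Set.Ici (-r)) := hzc.sub (delayedExp_continuousOn hr)
  have hD0 : ∀ s ∈ Set.Icc (-r) (0:ℝ), D s = 0 := fun s hs => by
    simp only [hD, hz0 s hs, hE, delayedExp_init hr hs, sub_self]
  have key : ∀ n : ℕ, ∀ t ∈ Set.Icc (-r) ((n : ℝ) * r), D t = 0 := by
    intro n
    induction n with
    | zero => intro t ht; exact hD0 t (by simpa using ht)
    | succ n ih =>
      intro t ht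
      rcases le_or_gt t ((n:ℝ) * r) with h | h
      · exact ih t ⟨ht.1, h⟩
      · have hnr0 : (0:ℝ) ≤ (n:ℝ) * r := by positivity
        have hDconst : D t = D ((n:ℝ) * r) := by
          apply const_of_deriv_zero h.le
          · apply hDc.mono
            intro x hx
            simp only [Set.mem_Ici]
            linarith [hx.1]
          · intro x hx
            have hx0 : 0 < x := lt_of_le_of_lt hnr0 hx.1
            have hxr : x - r ∈ Set.Icc (-r) ((n:ℝ) * r) := by
              constructor
              · linarith
              · have := ht.2
                push_cast at this ⊢
                linarith [hx.2]
            have hDxr : D (x - r) = 0 := ih (x - r) hxr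
            have hzd' := hzd x hx0
            have hEd' := delayedExp_hasDerivAt (k := k) hr hx0
            have : HasDerivAt D (k * z (x - r) - k * E (x - r)) x := hzd'.sub hEd'
            have hval : k * z (x - r) - k * E (x - r) = 0 := by
              have h0 : z (x - r) - E (x - r) = 0 := hDxr
              rw [← mul_sub, h0, mul_zero]
            rwa [hval] at this
        rw [hDconst]
        exact ih ((n:ℝ) * r) ⟨by linarith, le_refl _⟩
  intro t ht
  obtain ⟨n, hn⟩ := Archimedean.arch t hr
  have hn' : t ≤ (n:ℝ) * r := by simpa [nsmul_eq_mul] using hn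
  have := key n t ⟨ht, hn'⟩
  simp only [hD] at this
  linarith [this]
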